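/- (Correctness of Group-Hier-Prox.) Let v ∈ ℝ^k with v ≠ 0, u ∈ ℝ^K, λ ≥ 0, M > 0. Sort the entries of u so that |u_(1)| ≥ ... ≥ |u_(K)|, with conventions |u_(0)| = +∞ and |u_(K+1)| = 0. For m ∈ {0,1,...,K} define w_m = (M/(1+mM²)) · S_λ( ‖v‖₂ + M·Σ_{i=1}^m |u_(i)| ). Let m̃ be the smallest m ∈ {0,...,K} such that |u_(m+1)| ≤ w_m ≤ |u_(m)|. Then the pair (b̃, W̃) with b̃ = (1/M)·w_{m̃}·(v/‖v‖₂) and W̃_j = sign(u_j)·min{ w_{m̃}, |u_j| } for each j is a global minimizer of: minimize ½‖v − b‖₂² + ½‖u − W‖₂² + λ‖b‖₂ over (b, W) ∈ ℝ^k × ℝ^K subject to ‖W‖_∞ ≤ M‖b‖₂. -/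

import Mathlib

/-- Soft-thresholding operator `S_t(x) = sign(x) · max(|x| − t, 0)`. -/
noncomputable def st (t x : ℝ) : ℝ := Real.sign x * max (|x| - t) 0

/-- Euclidean (ℓ₂) norm on `ℝ^n`. -/
noncomputable def l2 {n : ℕ} (x : Fin n → ℝ) : ℝ := Real.sqrt (∑ i, (x i) ^ 2)

/-- `du u σ m = |u_(m)|`, the `m`-th largest absolute entry of `u` (1-based, via a sorting
permutation `σ`), with the out-of-range convention `|u_(m)| = 0` for `m > K`
(implementing `|u_(K+1)| = 0`). -/
noncomputable def du {K : ℕ} (u : Fin K → ℝ) (σ : Equiv.Perm (Fin K)) (m : ℕ) : ℝ :=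
  if h : m - 1 < K then |u (σ ⟨m - 1, h⟩)| else 0

/-- `w_m = (M/(1+mM²)) · S_λ( ‖v‖₂ + M·Σ_{i=1}^m |u_(i)| )`. -/
noncomputable def wmg {k K : ℕ} (u : Fin K → ℝ) (σ : Equiv.Perm (Fin K))
    (lam M : ℝ) (v : Fin k → ℝ) (m : ℕ) : ℝ :=
  (M / (1 + (m : ℝ) * M ^ 2)) * st lam (l2 v + M * ∑ i ∈ Finset.Icc 1 m, du u σ i)

/-- Objective of the group Hier-Prox problem: `½‖v − b‖₂² + ½‖u − W‖₂² + λ‖b‖₂`. -/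
noncomputable def objG {k K : ℕ} (lam : ℝ) (v : Fin k → ℝ) (u : Fin K → ℝ)
    (b : Fin k → ℝ) (W : Fin K → ℝ) : ℝ :=
  (1 / 2) * ∑ i, (v i - b i) ^ 2 + (1 / 2) * ∑ j, (u j - W j) ^ 2 + lam * l2 b

lemma l2_nonneg {n : ℕ} (x : Fin n → ℝ) : 0 ≤ l2 x := Real.sqrt_nonneg _

lemma l2_sq {n : ℕ} (x : Fin n → ℝ) : (l2 x) ^ 2 = ∑ i, (x i) ^ 2 :=
  Real.sq_sqrt (Finset.sum_nonneg fun i _ => sq_nonneg _)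

lemma l2_pos {n : ℕ} (x : Fin n → ℝ) (hx : x ≠ 0) : 0 < l2 x := by
  have h : ∃ i, x i ≠ 0 := by
    by_contra h; push_neg at h; exact hx (funext h)
  obtain ⟨i, hi⟩ := h
  apply Real.sqrt_pos.2
  exact Finset.sum_pos' (fun j _ => sq_nonneg _) ⟨i, Finset.mem_univ i, by positivity⟩

lemma l2_smul {n : ℕ} (c : ℝ) (x : Fin n → ℝ) : l2 (fun i => c * x i) = |c| * l2 x := by
  unfold l2
  rw [← Real.sqrt_sq_eq_abs, ← Real.sqrt_mul (sq_nonneg c), Finset.mul_sum]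
  congr 1
  exact Finset.sum_congr rfl fun i _ => by ring

/-- Cauchy–Schwarz consequence -/
lemma sum_sq_ge {n : ℕ} (x y : Fin n → ℝ) :
    (l2 x - l2 y) ^ 2 ≤ ∑ i, (x i - y i) ^ 2 := by
  have hcs := Finset.sum_mul_sq_le_sq_mul_sq Finset.univ x y
  have h1 : (∑ i, x i * y i) ≤ l2 x * l2 y := by
    have h2 : (l2 x * l2 y) ^ 2 = (∑ i, (x i)^2) * ∑ i, (y i)^2 := by
      rw [mul_pow, l2_sq, l2_sq]
    nlinarith [l2_nonneg x, l2_nonneg y, mul_nonneg (l2_nonneg x) (l2_nonneg y),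
      sq_nonneg ((∑ i, x i * y i) - l2 x * l2 y)]
  have hx := l2_sq x
  have hy := l2_sq y
  have hexp : ∑ i, (x i - y i) ^ 2 = (∑ i, (x i)^2) - 2 * (∑ i, x i * y i) + ∑ i, (y i)^2 := by
    rw [Finset.mul_sum, ← Finset.sum_sub_distrib, ← Finset.sum_add_distrib]
    exact Finset.sum_congr rfl fun i _ => by ring
  nlinarith

/-- convexity per-term lemma -/
lemma maxsq_ineq (a a0 : ℝ) :
    (1/2) * (max a0 0) ^ 2 + (max a0 0) * (a - a0) ≤ (1/2) * (max a 0) ^ 2 := by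
  rcases le_or_gt a0 0 with h | h
  · rw [max_eq_right h]
    nlinarith [sq_nonneg (max a 0)]
  · rw [max_eq_left h.le]
    have h1 : a ≤ max a 0 := le_max_left _ _
    have h2 : 0 ≤ max a 0 := le_max_right _ _
    nlinarith [sq_nonneg (max a 0 - a0)]

lemma abs_sign_le_one (y : ℝ) : |Real.sign y| ≤ 1 := by
  rcases lt_trichotomy y 0 with h | h | h
  · rw [Real.sign_of_neg h]; norm_num
  · rw [h, Real.sign_zero]; norm_num
  · rw [Real.sign_of_pos h]; norm_num

/-- the residual identity for the candidate W -/
lemma resid_eq (y w : ℝ) (hw : 0 ≤ w) :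
    (y - Real.sign y * min w |y|) ^ 2 = (max (|y| - w) 0) ^ 2 := by
  rcases lt_trichotomy y 0 with h | h | h
  · rw [Real.sign_of_neg h, abs_of_neg h]
    rcases le_total w (-y) with h2 | h2
    · rw [min_eq_left h2, max_eq_left (by linarith)]; ring
    · rw [min_eq_right h2, max_eq_right (by linarith)]; ring_nf
  · simp [h, max_eq_right (by linarith : -w ≤ 0)]
  · rw [Real.sign_of_pos h, abs_of_pos h]
    rcases le_total w y with h2 | h2
    · rw [min_eq_left h2, max_eq_left (by linarith)]; ring
    · rw [min_eq_right h2, max_eq_right (by linarith)]; ring_nf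

set_option maxHeartbeats 1600000 in
/-- Correctness of Group-Hier-Prox: if `m̃` is the smallest `m ∈ {0,…,K}` with
`|u_(m+1)| ≤ w_m ≤ |u_(m)|` (conventions `|u_(0)| = +∞`, i.e. the upper condition is vacuous
at `m = 0`, and `|u_(K+1)| = 0`), then `b̃ = (1/M)·w_{m̃}·v/‖v‖₂` together with
`W̃_j = sign(u_j)·min{w_{m̃}, |u_j|}` is a global minimizer of
`½‖v − b‖₂² + ½‖u − W‖₂² + λ‖b‖₂` subject to `‖W‖_∞ ≤ M‖b‖₂`. -/
theorem stmt3 (k K : ℕ) (hk : 1 ≤ k) (hK : 1 ≤ K)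
    (lam M : ℝ) (hlam : 0 ≤ lam) (hM : 0 < M)
    (v : Fin k → ℝ) (hv : v ≠ 0) (u : Fin K → ℝ)
    (σ : Equiv.Perm (Fin K))
    (hsort : ∀ i j : Fin K, i ≤ j → |u (σ j)| ≤ |u (σ i)|)
    (mt : ℕ) (hmt : mt ≤ K)
    (hcond : du u σ (mt + 1) ≤ wmg u σ lam M v mt ∧
      (0 < mt → wmg u σ lam M v mt ≤ du u σ mt))
    (hsmallest : ∀ m, m ≤ K →
      (du u σ (m + 1) ≤ wmg u σ lam M v m ∧ (0 < m → wmg u σ lam M v m ≤ du u σ m)) →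
      mt ≤ m) :
    (∀ j, |Real.sign (u j) * min (wmg u σ lam M v mt) (abs (u j))|
        ≤ M * l2 (fun i => (1 / M) * wmg u σ lam M v mt * (v i / l2 v))) ∧
    ∀ (b : Fin k → ℝ) (W : Fin K → ℝ), (∀ j, |W j| ≤ M * l2 b) →
      objG lam v u (fun i => (1 / M) * wmg u σ lam M v mt * (v i / l2 v))
          (fun j => Real.sign (u j) * min (wmg u σ lam M v mt) (abs (u j)))
        ≤ objG lam v u b W := by
  have hnv : 0 < l2 v := l2_pos v hv
  set nv := l2 v with hnvdef
  set S := ∑ i ∈ Finset.Icc 1 mt, du u σ i with hSdef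
  set w := wmg u σ lam M v mt with hwdef
  have hdu_nonneg : ∀ m, 0 ≤ du u σ m := by
    intro m; unfold du; split
    · exact abs_nonneg _
    · exact le_refl 0
  have hw0 : 0 ≤ w := le_trans (hdu_nonneg (mt + 1)) hcond.1
  have hSnn : 0 ≤ S := Finset.sum_nonneg fun i _ => hdu_nonneg i
  have hden : (0:ℝ) < 1 + (mt:ℝ) * M ^ 2 := by positivity
  have hnvne : nv ≠ 0 := ne_of_gt hnv
  have hMne : M ≠ 0 := ne_of_gt hM
  -- the candidate b and its norm
  have hl2b : l2 (fun i => (1 / M) * w * (v i / nv)) = w / M := by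
    have he : (fun i => (1 / M) * w * (v i / nv)) = fun i => (w / (M * nv)) * v i := by
      funext i; field_simp
    rw [he, l2_smul, abs_of_nonneg (div_nonneg hw0 (by positivity)), ← hnvdef]
    field_simp
  -- value of w via P
  have hP : w = M / (1 + (mt:ℝ) * M ^ 2) * max (nv + M * S - lam) 0 := by
    rw [hwdef]; unfold wmg
    rw [← hnvdef, ← hSdef]
    congr 1
    unfold st
    rw [Real.sign_of_pos (by positivity), abs_of_pos (by positivity), one_mul]
  -- key combinatorial identity
  have hT : ∑ j : Fin K, max (|u j| - w) 0 = S - mt * w := by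
    set A : ℕ → ℝ := fun i => if h : i < K then |u (σ ⟨i, h⟩)| else 0 with hAdef
    have hgen : ∀ g : ℕ → ℝ,
        (∑ j : Fin K, if (j : ℕ) < mt then g j else 0) = ∑ i ∈ Finset.range mt, g i := by
      intro g
      rw [Fin.sum_univ_eq_sum_range (fun i => if i < mt then g i else 0) K,
        ← Finset.sum_filter]
      congr 1
      ext a
      simp only [Finset.mem_filter, Finset.mem_range]
      omega
    have hperm : ∑ j : Fin K, max (|u j| - w) 0 = ∑ j : Fin K, max (|u (σ j)| - w) 0 :=
      (Equiv.sum_comp σ fun j => max (|u j| - w) 0).symm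
    have hterm : ∀ j : Fin K, max (|u (σ j)| - w) 0
        = if (j : ℕ) < mt then (fun i : ℕ => A i - w) (j : ℕ) else 0 := by
      intro j
      by_cases hj : (j : ℕ) < mt
      · have hmtpos : 0 < mt := Nat.pos_of_ne_zero (by omega)
        have hge : du u σ mt ≤ |u (σ j)| := by
          unfold du
          rw [dif_pos (show mt - 1 < K by omega)]
          exact hsort j ⟨mt - 1, by omega⟩ (by simp only [Fin.le_def]; omega)
        have hle : w ≤ |u (σ j)| := le_trans (hcond.2 hmtpos) hge
        rw [if_pos hj, max_eq_left (by linarith)]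
        simp only [hAdef]
        rw [dif_pos j.isLt]
      · have hle2 : |u (σ j)| ≤ du u σ (mt + 1) := by
          unfold du
          rw [dif_pos (show mt + 1 - 1 < K by omega)]
          exact hsort ⟨mt + 1 - 1, by omega⟩ j (by simp only [Fin.le_def]; omega)
        have : |u (σ j)| ≤ w := le_trans hle2 hcond.1
        rw [if_neg hj, max_eq_right (by linarith)]
    have hSval : S = ∑ i ∈ Finset.range mt, A i := by
      rw [hSdef]
      have hdA : ∀ m : ℕ, du u σ m = A (m - 1) := fun m => rfl
      rw [← Finset.Ico_add_one_right_eq_Icc, Finset.sum_Ico_eq_sum_range]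
      exact Finset.sum_congr rfl fun i _ => by rw [hdA]; congr 1; omega
    rw [hperm]
    calc ∑ j : Fin K, max (|u (σ j)| - w) 0
        = ∑ j : Fin K, if (j : ℕ) < mt then (fun i : ℕ => A i - w) (j : ℕ) else 0 :=
          Finset.sum_congr rfl fun j _ => hterm j
      _ = ∑ i ∈ Finset.range mt, (A i - w) := hgen fun i => A i - w
      _ = (∑ i ∈ Finset.range mt, A i) - mt * w := by
          rw [Finset.sum_sub_distrib, Finset.sum_const, Finset.card_range, nsmul_eq_mul]
      _ = S - mt * w := by rw [hSval]
  -- stationarity facts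
  have hD : 0 ≤ w / M - nv + lam - M * (S - mt * w)
      ∧ (w / M - nv + lam - M * (S - mt * w)) * (w / M) = 0 := by
    rcases le_or_gt (nv + M * S - lam) 0 with h | h
    · have hwz : w = 0 := by rw [hP, max_eq_right h, mul_zero]
      rw [hwz]
      constructor
      · simp only [zero_div, mul_zero, sub_zero, zero_sub]
        nlinarith
      · simp
    · have hw1 : w * (1 + (mt:ℝ) * M ^ 2) = M * (nv + M * S - lam) := by
        rw [hP, max_eq_left h.le]; field_simp
      have hzero : w / M - nv + lam - M * (S - mt * w) = 0 := by
        field_simp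
        nlinarith [hw1]
      rw [hzero]; simp
  constructor
  · -- feasibility
    intro j
    rw [hl2b]
    have h1 : M * (w / M) = w := by field_simp
    rw [h1, abs_mul]
    have h2 : abs (min w (abs (u j))) = min w (abs (u j)) :=
      abs_of_nonneg (le_min hw0 (abs_nonneg _))
    calc abs (Real.sign (u j)) * abs (min w (abs (u j)))
        ≤ 1 * abs (min w (abs (u j))) :=
          mul_le_mul_of_nonneg_right (abs_sign_le_one _) (abs_nonneg _)
      _ = min w (abs (u j)) := by rw [one_mul, h2]
      _ ≤ w := min_le_left _ _
  · -- optimality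
    intro b W hW
    set β := l2 b with hβdef
    have hβ0 : 0 ≤ β := l2_nonneg b
    -- lower bound for the objective at (b, W)
    have L1 : (nv - β) ^ 2 ≤ ∑ i, (v i - b i) ^ 2 := sum_sq_ge v b
    have L2 : ∀ j, (max (|u j| - M * β) 0) ^ 2 ≤ (u j - W j) ^ 2 := by
      intro j
      have h1 : |W j| ≤ M * β := hW j
      have h2 : max (|u j| - M * β) 0 ≤ |u j - W j| := by
        apply max_le _ (abs_nonneg _)
        have := abs_sub_abs_le_abs_sub (u j) (W j)
        linarith
      calc (max (|u j| - M * β) 0) ^ 2 ≤ |u j - W j| ^ 2 :=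
            pow_le_pow_left₀ (le_max_right _ _) h2 2
        _ = (u j - W j) ^ 2 := sq_abs _
    have L2s : ∑ j, (max (|u j| - M * β) 0) ^ 2 ≤ ∑ j, (u j - W j) ^ 2 :=
      Finset.sum_le_sum fun j _ => L2 j
    have Lobj : (1/2) * (nv - β) ^ 2 + (1/2) * ∑ j, (max (|u j| - M * β) 0) ^ 2 + lam * β
        ≤ objG lam v u b W := by
      unfold objG
      rw [← hβdef]
      nlinarith [L1, L2s]
    -- value of the objective at the candidate
    have Ceq : objG lam v u (fun i => (1 / M) * w * (v i / nv))
          (fun j => Real.sign (u j) * min w |u j|)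
        = (1/2) * (nv - w / M) ^ 2 + (1/2) * ∑ j, (max (|u j| - w) 0) ^ 2 + lam * (w / M) := by
      unfold objG
      rw [hl2b]
      congr 2
      · congr 1
        have he : ∀ i, (v i - (1 / M) * w * (v i / nv)) ^ 2
            = (1 - w / (M * nv)) ^ 2 * (v i) ^ 2 := by
          intro i; field_simp
        calc ∑ i, (v i - (1 / M) * w * (v i / nv)) ^ 2
            = ∑ i, (1 - w / (M * nv)) ^ 2 * (v i) ^ 2 :=
              Finset.sum_congr rfl fun i _ => he i
          _ = (1 - w / (M * nv)) ^ 2 * ∑ i, (v i) ^ 2 := by rw [Finset.mul_sum]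
          _ = (1 - w / (M * nv)) ^ 2 * nv ^ 2 := by rw [← l2_sq v, ← hnvdef]
          _ = (nv - w / M) ^ 2 := by field_simp
      · congr 1
        exact Finset.sum_congr rfl fun j _ => resid_eq (u j) w hw0
    -- convexity comparison
    have hsum : ∑ j, ((1/2) * (max (|u j| - w) 0) ^ 2
          + (max (|u j| - w) 0) * ((|u j| - M * β) - (|u j| - w)))
        ≤ ∑ j, (1/2) * (max (|u j| - M * β) 0) ^ 2 :=
      Finset.sum_le_sum fun j _ => maxsq_ineq (|u j| - M * β) (|u j| - w)
    have hsum2 : (1/2) * (∑ j, (max (|u j| - w) 0) ^ 2) + (w - M * β) * (S - mt * w)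
        ≤ (1/2) * ∑ j, (max (|u j| - M * β) 0) ^ 2 := by
      have he : ∀ j : Fin K, (1/2) * (max (|u j| - w) 0) ^ 2
          + (max (|u j| - w) 0) * ((|u j| - M * β) - (|u j| - w))
          = (1/2) * (max (|u j| - w) 0) ^ 2 + (w - M * β) * (max (|u j| - w) 0) := by
        intro j; ring
      rw [Finset.sum_congr rfl (fun j _ => he j), Finset.sum_add_distrib,
        ← Finset.mul_sum, ← Finset.mul_sum, hT, ← Finset.mul_sum] at hsum
      linarith [hsum]
    have hfin : (1/2) * (nv - w / M) ^ 2 + (1/2) * ∑ j, (max (|u j| - w) 0) ^ 2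
          + lam * (w / M)
        ≤ (1/2) * (nv - β) ^ 2 + (1/2) * ∑ j, (max (|u j| - M * β) 0) ^ 2 + lam * β := by
      clear_value w β nv S
      obtain ⟨hD0, hDc⟩ := hD
      have key : ∀ bt X Y T : ℝ,
          (1/2 * X + (M * bt - M * β) * T ≤ 1/2 * Y) →
          (0 ≤ bt - nv + lam - M * T) →
          ((bt - nv + lam - M * T) * bt = 0) →
          (1/2) * (nv - bt) ^ 2 + (1/2) * X + lam * bt
            ≤ (1/2) * (nv - β) ^ 2 + (1/2) * Y + lam * β := by
        intro bt X Y T h1 h2 h3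
        nlinarith [mul_nonneg h2 hβ0, sq_nonneg (β - bt), h1, h3]
      have hbt' : M * (w / M) = w := by field_simp
      have h1' : 1/2 * (∑ j, (max (|u j| - w) 0) ^ 2)
          + (M * (w / M) - M * β) * (S - mt * w)
          ≤ 1/2 * ∑ j, (max (|u j| - M * β) 0) ^ 2 := by
        rw [hbt']; linarith [hsum2]
      exact key (w / M) _ _ (S - mt * w) h1' hD0 hDc
    rw [Ceq]
    linarith [Lobj, hfin]
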